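/- The function u(x,t) defined by u(x,t) = (2/3 · (t - x))^{3/2} for x < t and u(x,t) = 0 for x ≥ t is a C¹ function on [0,∞) × [0,∞) that satisfies the transport equation u_x + u_t = 0 on the region where t ≠ x, has u(x,0) = 0 and u_t(x,0) = 0 for all x > 0, and satisfies the boundary condition u_x(0,t) = -(u_t(0,t)³)_t for all t > 0. -/
import Mathlib


open Set Real

private lemma rpow_neg_three_halves {y : ℝ} (hy : y < 0) : y ^ ((3 : ℝ) / 2) = 0 := by
  rw [Real.rpow_def_of_neg hy]
  have h : (3 : ℝ) / 2 * π = π / 2 + π := by ring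
  rw [h, Real.cos_add_pi, Real.cos_pi_div_two]
  simp

private lemma rpow_neg_one_half {y : ℝ} (hy : y < 0) : y ^ ((1 : ℝ) / 2) = 0 := by
  rw [Real.rpow_def_of_neg hy]
  have h : (1 : ℝ) / 2 * π = π / 2 := by ring
  rw [h, Real.cos_pi_div_two]
  simp

theorem stmt3 (u : ℝ × ℝ → ℝ)
    (hu : ∀ x t : ℝ, u (x, t) =
      if x < t then ((2 / 3) * (t - x)) ^ ((3 : ℝ) / 2) else 0) :
    ContDiffOn ℝ 1 u (Ici 0 ×ˢ Ici 0) ∧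
    (∀ x t : ℝ, 0 ≤ x → 0 ≤ t → t ≠ x →
      deriv (fun s => u (s, t)) x + deriv (fun s => u (x, s)) t = 0) ∧
    (∀ x : ℝ, 0 < x → u (x, 0) = 0 ∧ deriv (fun s => u (x, s)) 0 = 0) ∧
    (∀ t : ℝ, 0 < t →
      deriv (fun s => u (s, t)) 0 =
        - deriv (fun s => (deriv (fun τ => u (0, τ)) s) ^ 3) t) := by
  set g : ℝ → ℝ := fun y => ((2 / 3) * y) ^ ((3 : ℝ) / 2) with hgdef
  set g' : ℝ → ℝ := fun y => ((2 / 3) * y) ^ ((1 : ℝ) / 2) with hg'def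
  -- g vanishes for y ≤ 0
  have hg0 : ∀ y : ℝ, y ≤ 0 → g y = 0 := by
    intro y hy
    rcases lt_or_eq_of_le hy with h | h
    · exact rpow_neg_three_halves (by linarith)
    · simp [hgdef, h, Real.zero_rpow (by norm_num : ((3 : ℝ) / 2) ≠ 0)]
  have hg'0 : ∀ y : ℝ, y ≤ 0 → g' y = 0 := by
    intro y hy
    rcases lt_or_eq_of_le hy with h | h
    · exact rpow_neg_one_half (by linarith)
    · simp [hg'def, h, Real.zero_rpow (by norm_num : ((1 : ℝ) / 2) ≠ 0)]
  -- u equals g (t - x)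
  have huq : ∀ x t : ℝ, u (x, t) = g (t - x) := by
    intro x t
    rw [hu x t]
    by_cases h : x < t
    · simp [h, hgdef]
    · rw [if_neg h]
      exact (hg0 (t - x) (by linarith [le_of_not_gt h])).symm
  -- derivative of g
  have hgd : ∀ y : ℝ, HasDerivAt g (g' y) y := by
    intro y
    have h1 : HasDerivAt (fun y : ℝ => (2 / 3) * y) (2 / 3) y := by
      simpa using (hasDerivAt_id y).const_mul (2 / 3 : ℝ)
    have h2 := (Real.hasDerivAt_rpow_const
      (x := (2 / 3) * y) (p := (3 : ℝ) / 2) (Or.inr (by norm_num))).comp y h1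
    have h3 : (3 : ℝ) / 2 * ((2 / 3) * y) ^ ((3 : ℝ) / 2 - 1) * (2 / 3) = g' y := by
      have : ((3 : ℝ) / 2 - 1) = (1 : ℝ) / 2 := by norm_num
      rw [this]; simp [hg'def]; ring
    rw [← h3]
    exact h2
  -- cube identity: (g' s)^3 = g s
  have hcube : ∀ s : ℝ, (g' s) ^ 3 = g s := by
    intro s
    rcases le_or_gt s 0 with h | h
    · rw [hg'0 s h, hg0 s h]; ring
    · have hb : (0 : ℝ) ≤ (2 / 3) * s := by positivity
      rw [hg'def, hgdef]
      rw [← Real.rpow_natCast (((2 / 3) * s) ^ ((1 : ℝ) / 2)) 3,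
        ← Real.rpow_mul hb]
      norm_num
  -- partial derivatives of u
  have hux : ∀ x t : ℝ, HasDerivAt (fun s => u (s, t)) (-(g' (t - x))) x := by
    intro x t
    have h1 : HasDerivAt (fun s : ℝ => t - s) (-1) x := by
      simpa using (hasDerivAt_id x).const_sub t
    have h2 := (hgd (t - x)).comp x h1
    simp only [mul_neg_one] at h2
    have he : (fun s => u (s, t)) = fun s => g (t - s) := funext fun s => huq s t
    rw [he]
    exact h2
  have hut : ∀ x t : ℝ, HasDerivAt (fun s => u (x, s)) (g' (t - x)) t := by
    intro x t
    have h1 : HasDerivAt (fun s : ℝ => s - x) 1 t := by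
      simpa using (hasDerivAt_id t).sub_const x
    have h2 := (hgd (t - x)).comp t h1
    simp only [mul_one] at h2
    have he : (fun s => u (x, s)) = fun s => g (s - x) := funext fun s => huq x s
    rw [he]
    exact h2
  -- g is C¹
  have hgC1 : ContDiff ℝ 1 g := by
    rw [contDiff_one_iff_deriv]
    constructor
    · exact fun y => (hgd y).differentiableAt
    · have : deriv g = g' := funext fun y => (hgd y).deriv
      rw [this]
      have hcont : Continuous fun y : ℝ => y ^ ((1 : ℝ) / 2) :=
        Real.continuous_rpow_const (by norm_num)
      exact hcont.comp (continuous_const.mul continuous_id)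
  refine ⟨?_, ?_, ?_, ?_⟩
  · -- ContDiffOn
    have hueq : u = fun p : ℝ × ℝ => g (p.2 - p.1) := by
      funext p
      obtain ⟨x, t⟩ := p
      exact huq x t
    rw [hueq]
    exact (hgC1.comp (contDiff_snd.sub contDiff_fst)).contDiffOn
  · -- transport equation
    intro x t _ _ _
    rw [(hux x t).deriv, (hut x t).deriv]
    ring
  · -- initial conditions
    intro x hx
    constructor
    · rw [huq x 0]
      exact hg0 (0 - x) (by linarith)
    · rw [(hut x 0).deriv]
      exact hg'0 (0 - x) (by linarith)
  · -- boundary condition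
    intro t _
    rw [(hux 0 t).deriv]
    have h1 : (fun τ => u (0, τ)) = g := by
      funext τ; rw [huq 0 τ]; norm_num
    have h2 : (fun s => (deriv (fun τ => u (0, τ)) s) ^ 3) = g := by
      funext s
      rw [h1, (hgd s).deriv, hcube s]
    rw [h2, (hgd t).deriv]
    norm_num
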